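/- The integer 6 - 13·2 + 6·4 = 4, the largest odd factor of which is 1, and 6 - 13t + 6t^2 is not equal to 1 nor to any power (1 - 6t + 11t^2 - 6t^3 + t^4)^n; hence the polynomial 6 - 13t + 6t^2 cannot be written (up to units ± t^k) as a product Π_{i=1}^N {(1-t)^{m_i} - t^{l_i}(-t)^{p_i}} · {(1-t)^{m_i} - t^{-l_i}(-t)^{m_i - p_i}} with m_i ≥ 1, 0 ≤ p_i ≤ m_i, l_i ∈ Z. -/

import Mathlib

open LaurentPolynomial

noncomputable def stmt19u : ℚˣ := Units.mk0 (2/3 : ℚ) (by norm_num)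

/-- Evaluation of integer Laurent polynomials at `t = 2/3`. -/
noncomputable def stmt19φ : LaurentPolynomial ℤ →ₐ[ℤ] ℚ :=
  AddMonoidAlgebra.lift ℤ ℚ ℤ ((Units.coeHom ℚ).comp (zpowersHom ℚˣ stmt19u))

lemma stmt19φ_T (n : ℤ) : stmt19φ (T n) = (2/3 : ℚ) ^ n := by
  rw [stmt19φ, T, AddMonoidAlgebra.lift_single]
  show (1:ℤ) • ((stmt19u ^ n : ℚˣ) : ℚ) = _
  simp [stmt19u]

lemma stmt19φ_C (a : ℤ) : stmt19φ (C a) = a := by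
  rw [stmt19φ, LaurentPolynomial.C, AddMonoidAlgebra.singleZeroRingHom]
  show (AddMonoidAlgebra.lift ℤ ℚ ℤ _) (AddMonoidAlgebra.single 0 a) = a
  rw [AddMonoidAlgebra.lift_single]
  show a • ((stmt19u ^ (0:ℤ) : ℚˣ) : ℚ)  = _
  simp

lemma stmt19Δ : stmt19φ (C 6 - C 13 * T 1 + C 6 * T 2 : LaurentPolynomial ℤ) = 0 := by
  simp only [map_add, map_sub, map_mul, stmt19φ_T, stmt19φ_C]
  norm_num

lemma stmt19aux (m : ℕ) (hm : 1 ≤ m) (J : ℤ) : ((1:ℚ)/3)^m ≠ (2/3:ℚ)^J := by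
  intro h
  rcases J with n | n
  · rw [Int.ofNat_eq_coe, zpow_natCast] at h
    rw [div_pow, div_pow, one_pow, div_eq_div_iff (by positivity) (by positivity), one_mul] at h
    have h' : (3:ℕ) ^ n = 2 ^ n * 3 ^ m := by exact_mod_cast h
    rcases Nat.eq_zero_or_pos n with hn | hn
    · subst hn
      simp at h'
      have : (1:ℕ) < 3 ^ m := Nat.one_lt_pow (by omega) (by norm_num)
      omega
    · have h2 : (2:ℕ) ∣ 3 ^ n := h' ▸ dvd_mul_of_dvd_left (dvd_pow_self 2 hn.ne') _
      have := Nat.Prime.dvd_of_dvd_pow Nat.prime_two h2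
      norm_num at this
  · rw [zpow_negSucc] at h
    rw [div_pow, div_pow, one_pow, inv_div, div_eq_div_iff (by positivity) (by positivity), one_mul] at h
    have h' : (2:ℕ) ^ (n+1) = 3 ^ (n+1) * 3 ^ m := by exact_mod_cast h
    have h2 : (2:ℕ) ∣ 3 ^ (n+1) * 3 ^ m := ⟨2 ^ n, by rw [← h']; ring⟩
    rw [← pow_add] at h2
    have := Nat.Prime.dvd_of_dvd_pow Nat.prime_two h2
    norm_num at this

lemma stmt19sub (m : ℕ) (hm : 1 ≤ m) (j : ℤ) (p : ℕ) :
    (1 - (2:ℚ)/3)^m - (2/3:ℚ)^j * (-(2/3:ℚ))^p ≠ 0 := by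
  rw [sub_ne_zero]
  intro h
  have h13 : (1 - (2:ℚ)/3) = 1/3 := by norm_num
  rw [h13] at h
  rcases Nat.even_or_odd p with he | ho
  · rw [he.neg_pow] at h
    apply stmt19aux m hm (j + p)
    rw [zpow_add₀ (by norm_num : (2/3:ℚ) ≠ 0), zpow_natCast]
    exact h
  · rw [ho.neg_pow] at h
    have hpos : (0:ℚ) < (1/3)^m := by positivity
    have hneg : (2/3:ℚ)^j * -((2/3:ℚ))^p < 0 := by
      have : (0:ℚ) < (2/3)^j * (2/3)^p := by positivity
      nlinarith
    rw [h] at hpos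
    linarith

theorem stmt19 :
    ((6 - 13 * 2 + 6 * 4 : ℤ) = 4) ∧
    (∀ k : ℕ, Odd k → (k : ℤ) ∣ 4 → k = 1) ∧
    ((C 6 - C 13 * T 1 + C 6 * T 2 : LaurentPolynomial ℤ) ≠ 1) ∧
    (∀ n : ℕ, (C 6 - C 13 * T 1 + C 6 * T 2 : LaurentPolynomial ℤ) ≠
      (1 - C 6 * T 1 + C 11 * T 2 - C 6 * T 3 + T 4) ^ n) ∧
    ¬ ∃ (N : ℕ) (m p : ℕ → ℕ) (l : ℕ → ℤ), 0 < N ∧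
      (∀ i < N, 1 ≤ m i ∧ p i ≤ m i) ∧
      ∃ (ε : ℤˣ) (k : ℤ),
        (C 6 - C 13 * T 1 + C 6 * T 2 : LaurentPolynomial ℤ) =
          C ((ε : ℤ)) * T k *
            ∏ i ∈ Finset.range N,
              (((1 - T 1) ^ (m i) - T (l i) * (-T 1) ^ (p i)) *
                ((1 - T 1) ^ (m i) - T (-(l i)) * (-T 1) ^ (m i - p i))) := by
  refine ⟨by norm_num, ?_, ?_, ?_, ?_⟩
  · intro k hodd hdvd
    have h4 : k ∣ 4 := by exact_mod_cast hdvd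
    have hk : k ≤ 4 := Nat.le_of_dvd (by norm_num) h4
    interval_cases k <;> first | rfl | (exfalso; revert hodd h4; decide)
  · intro h
    have := congrArg stmt19φ h
    rw [stmt19Δ, map_one] at this
    norm_num at this
  · intro n h
    have := congrArg stmt19φ h
    rw [stmt19Δ, map_pow] at this
    simp only [map_add, map_sub, map_mul, map_one, stmt19φ_T, stmt19φ_C] at this
    norm_num at this
    exact absurd this.symm (by positivity)
  · rintro ⟨N, m, p, l, hN, hmp, ε, k, heq⟩
    have h0 := congrArg stmt19φ heq
    rw [stmt19Δ, map_mul, map_mul, map_prod] at h0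
    simp only [map_sub, map_mul, map_pow, map_one, map_neg, stmt19φ_T, stmt19φ_C] at h0
    have hz : (2/3:ℚ) ^ (1:ℤ) = 2/3 := by norm_num
    rw [hz] at h0
    refine mul_ne_zero (mul_ne_zero ?_ (zpow_ne_zero k (by norm_num))) ?_ h0.symm
    · exact_mod_cast ε.ne_zero
    · exact Finset.prod_ne_zero_iff.mpr fun i hi => mul_ne_zero
        (stmt19sub _ (hmp i (Finset.mem_range.mp hi)).1 _ _)
        (stmt19sub _ (hmp i (Finset.mem_range.mp hi)).1 _ _)
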